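/- For all integers m ≥ 2 and n ≥ 1, the region D_n^m ⊆ ℝ² is a topological disk: the subspace D_n^m of ℝ² is homeomorphic to the closed unit disk {x ∈ ℝ² : ‖x‖ ≤ 1}. -/

import Mathlib

/-- The ruler sequence: `s i = v₂(i) + 1`. -/
def rulerSeq (i : ℕ) : ℕ := padicValNat 2 i + 1

/-- `yCoord i = y_i = ∑_{j=1}^{i-1} s j`. -/
def yCoord (i : ℕ) : ℕ := ∑ j ∈ Finset.Ico 1 i, rulerSeq j

/-- The `i`-th bar of `D_n^m`: `[(i-1)m, im] × [y_i, y_i + 1]`. -/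
def bar (m i : ℕ) : Set (ℝ × ℝ) :=
  Set.Icc (((i : ℝ) - 1) * m) ((i : ℝ) * m) ×ˢ Set.Icc ((yCoord i : ℝ)) ((yCoord i : ℝ) + 1)

/-- The `i`-th connector of `D_n^m`: `[im - 1, im] × [y_i + 1, y_{i+1} + 1]`. -/
def connector (m i : ℕ) : Set (ℝ × ℝ) :=
  Set.Icc ((i : ℝ) * m - 1) ((i : ℝ) * m) ×ˢ
    Set.Icc ((yCoord i : ℝ) + 1) ((yCoord (i + 1) : ℝ) + 1)

/-- The region `D_n^m`: union of `2^n` bars and `2^n - 1` connectors. -/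
def Dregion (n m : ℕ) : Set (ℝ × ℝ) :=
  (⋃ i ∈ Finset.Icc 1 (2 ^ n), bar m i) ∪ ⋃ i ∈ Finset.Icc 1 (2 ^ n - 1), connector m i

namespace DiskProof

noncomputable section

open Set

/-! ### basic facts about `yCoord` -/

lemma yCoord_zero : yCoord 0 = 0 := by simp [yCoord]

lemma yCoord_one : yCoord 1 = 0 := by simp [yCoord]

lemma yCoord_mono : Monotone yCoord := by
  intro a b hab
  exact Finset.sum_le_sum_of_subset (Finset.Ico_subset_Ico le_rfl hab)

lemma yCoord_succ (i : ℕ) (hi : 1 ≤ i) : yCoord (i + 1) = yCoord i + rulerSeq i := by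
  simpa [yCoord] using Finset.sum_Ico_succ_top hi rulerSeq

/-- Clamped real `y`-coordinate, as a function of an integer index. -/
def Yr (n : ℕ) (j : ℤ) : ℝ := (yCoord (min j.toNat (2 ^ n)) : ℝ)

/-- Step height, `= rulerSeq i` for `1 ≤ i < 2^n`, and `0` outside. -/
def Sr (n : ℕ) (j : ℤ) : ℝ := Yr n (j + 1) - Yr n j

lemma Yr_mono (n : ℕ) : Monotone (Yr n) := by
  intro a b hab
  have : min a.toNat (2 ^ n) ≤ min b.toNat (2 ^ n) :=
    min_le_min (Int.toNat_le_toNat hab) le_rfl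
  exact_mod_cast Nat.cast_le.mpr (yCoord_mono this)

lemma Sr_nonneg (n : ℕ) (j : ℤ) : 0 ≤ Sr n j :=
  sub_nonneg.mpr (Yr_mono n (by omega))

lemma Yr_natCast (n : ℕ) (i : ℕ) (hi : i ≤ 2 ^ n) : Yr n (i : ℤ) = (yCoord i : ℝ) := by
  simp [Yr, Int.toNat_natCast, min_eq_left hi]

lemma Yr_of_ge (n : ℕ) {j : ℤ} (h : ((2 ^ n : ℕ) : ℤ) ≤ j) :
    Yr n j = (yCoord (2 ^ n) : ℝ) := by
  have h2 : min j.toNat (2 ^ n) = 2 ^ n := by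
    have : (2 ^ n : ℕ) ≤ j.toNat := by omega
    omega
  rw [Yr, h2]

lemma ceil_div_eq {m : ℕ} (hm : 2 ≤ m) {i : ℤ} {x : ℝ}
    (h1 : ((i : ℝ) - 1) * m < x) (h2 : x ≤ (i : ℝ) * m) : ⌈x / (m : ℝ)⌉ = i := by
  have hm0 : (0 : ℝ) < m := by exact_mod_cast Nat.pos_of_ne_zero (by omega)
  rw [Int.ceil_eq_iff]
  constructor
  · rw [lt_div_iff₀ hm0]; push_cast; linarith
  · rw [div_le_iff₀ hm0]; push_cast; linarith

/-! ### the local column map -/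

/-- Local homeomorphism from `[0,1] × [0, s+1]` onto `[0,1] × [0,1]`. -/
def psi (s : ℝ) (p : ℝ × ℝ) : ℝ × ℝ :=
  if p.1 + p.2 ≤ 1 then (p.1 / (1 + s), p.2)
  else if p.2 ≤ s + 1 - p.1 then ((2 * p.1 + p.2 - 1) / (1 + s), 1 - p.1)
  else ((s + p.1) / (1 + s), p.2 - s)

def psiInv (s : ℝ) (q : ℝ × ℝ) : ℝ × ℝ :=
  if (1 + s) * q.1 + q.2 ≤ 1 then ((1 + s) * q.1, q.2)
  else if q.2 ≤ (1 + s) * (1 - q.1) then (1 - q.2, (1 + s) * q.1 + 2 * q.2 - 1)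
  else ((1 + s) * q.1 - s, q.2 + s)

/-- membership in the box `[0,1] × [0,s+1]` -/
def InBox (s : ℝ) (p : ℝ × ℝ) : Prop :=
  0 ≤ p.1 ∧ p.1 ≤ 1 ∧ 0 ≤ p.2 ∧ p.2 ≤ s + 1

/-- membership in the unit square -/
def InSq (q : ℝ × ℝ) : Prop :=
  0 ≤ q.1 ∧ q.1 ≤ 1 ∧ 0 ≤ q.2 ∧ q.2 ≤ 1

lemma psi_mem {s : ℝ} (hs : 0 ≤ s) {p : ℝ × ℝ} (hp : InBox s p) : InSq (psi s p) := by
  obtain ⟨h0, h1, h2, h3⟩ := hp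
  have hs1 : (0 : ℝ) < 1 + s := by linarith
  unfold psi InSq
  split_ifs with hA hB
  · exact ⟨div_nonneg h0 hs1.le, by rw [div_le_one hs1]; linarith, h2, by linarith⟩
  · refine ⟨div_nonneg (by linarith) hs1.le, by rw [div_le_one hs1]; linarith,
      by simp; linarith, by simp; linarith⟩
  · push_neg at hA hB
    refine ⟨div_nonneg (by linarith) hs1.le, by rw [div_le_one hs1]; linarith,
      by simp; linarith, by simp; linarith⟩

lemma psiInv_mem {s : ℝ} (hs : 0 ≤ s) {q : ℝ × ℝ} (hq : InSq q) : InBox s (psiInv s q) := by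
  obtain ⟨h0, h1, h2, h3⟩ := hq
  have hs1 : (0 : ℝ) < 1 + s := by linarith
  have hexp : (1 + s) * (1 - q.1) = (1 + s) - (1 + s) * q.1 := by ring
  have hq1 : (1 + s) * q.1 ≤ 1 + s := by nlinarith
  have hq0 : 0 ≤ (1 + s) * q.1 := mul_nonneg hs1.le h0
  unfold psiInv InBox
  split_ifs with hA hB
  · exact ⟨hq0, by dsimp only; linarith, h2, by dsimp only; linarith⟩
  · push_neg at hA
    exact ⟨by simp; linarith, by simp; linarith, by simp; linarith, by simp; linarith⟩
  · push_neg at hA hB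
    exact ⟨by simp; linarith, by simp; linarith, by simp; linarith, by simp; linarith⟩

lemma psiInv_psi {s : ℝ} (hs : 0 ≤ s) {p : ℝ × ℝ} (hp : InBox s p) :
    psiInv s (psi s p) = p := by
  obtain ⟨h0, h1, h2, h3⟩ := hp
  have hs1 : (0 : ℝ) < 1 + s := by linarith
  have hd : (1 : ℝ) + s ≠ 0 := ne_of_gt hs1
  unfold psi
  split_ifs with hA hB
  · unfold psiInv
    rw [if_pos (by dsimp only; rw [mul_div_cancel₀ _ hd]; linarith)]
    dsimp only
    rw [mul_div_cancel₀ _ hd]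
  · unfold psiInv
    dsimp only
    rw [mul_div_cancel₀ _ hd]
    rw [if_neg (by push_neg at hA ⊢; linarith)]
    have hr : (1 + s) * (1 - (2 * p.1 + p.2 - 1) / (1 + s)) = (1 + s) - (2 * p.1 + p.2 - 1) := by
      field_simp
    rw [if_pos (by rw [hr]; linarith)]
    ext <;> dsimp <;> ring
  · push_neg at hA hB
    unfold psiInv
    dsimp only
    rw [mul_div_cancel₀ _ hd]
    rw [if_neg (by push_neg; linarith)]
    have hr : (1 + s) * (1 - (s + p.1) / (1 + s)) = (1 + s) - (s + p.1) := by field_simp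
    rw [if_neg (by rw [hr]; push_neg; linarith)]
    ext <;> dsimp <;> ring

lemma psi_psiInv {s : ℝ} (hs : 0 ≤ s) {q : ℝ × ℝ} (hq : InSq q) :
    psi s (psiInv s q) = q := by
  obtain ⟨h0, h1, h2, h3⟩ := hq
  have hs1 : (0 : ℝ) < 1 + s := by linarith
  have hd : (1 : ℝ) + s ≠ 0 := ne_of_gt hs1
  have hexp : (1 + s) * (1 - q.1) = (1 + s) - (1 + s) * q.1 := by ring
  unfold psiInv
  split_ifs with hA hB
  · unfold psi
    rw [if_pos (by dsimp only; linarith)]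
    dsimp only
    rw [mul_div_cancel_left₀ _ hd]
  · push_neg at hA
    unfold psi
    dsimp only
    rw [if_neg (by push_neg; linarith)]
    rw [if_pos (by linarith)]
    ext <;> dsimp
    · rw [div_eq_iff hd]; ring
    · ring
  · push_neg at hA hB
    unfold psi
    dsimp only
    rw [if_neg (by push_neg; linarith)]
    rw [if_neg (by push_neg; linarith)]
    ext <;> dsimp
    · rw [div_eq_iff hd]; ring
    · ring

lemma continuous_psi {s : ℝ} (hs : 0 ≤ s) : Continuous (psi s) := by
  have hs1 : (0 : ℝ) < 1 + s := by linarith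
  have hd : (1 : ℝ) + s ≠ 0 := ne_of_gt hs1
  unfold psi
  apply Continuous.if_le
  · fun_prop
  · apply Continuous.if_le
    · fun_prop
    · fun_prop
    · fun_prop
    · fun_prop
    · intro p hp
      have : p.2 = s + 1 - p.1 := hp
      ext <;> dsimp
      · rw [this, div_eq_div_iff hd hd]; ring
      · rw [this]; ring
  · fun_prop
  · fun_prop
  · intro p hp
    have h1 : p.1 + p.2 = 1 := hp
    rw [if_pos (by linarith)]
    ext <;> dsimp
    · rw [div_eq_div_iff hd hd]; linear_combination (-1 - s) * h1
    · linarith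

/-- evaluation of `psi` on the left edge -/
lemma psi_left {s τ : ℝ} (hs : 0 ≤ s) (h0 : 0 ≤ τ) (h1 : τ ≤ 1) : psi s (0, τ) = (0, τ) := by
  unfold psi
  rw [if_pos (by dsimp only; linarith)]
  simp

/-- evaluation of `psi` on the right edge -/
lemma psi_right {s τ : ℝ} (hs : 0 ≤ s) (h0 : 0 ≤ τ) (h1 : τ ≤ 1) :
    psi s (1, τ + s) = (1, τ) := by
  have hd : (1 : ℝ) + s ≠ 0 := by positivity
  unfold psi
  dsimp only
  split_ifs with hA hB
  · have hτ : τ = 0 := by linarith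
    have hs0 : s = 0 := by linarith
    rw [hτ, hs0]; norm_num
  · have hτ : τ = 0 := by linarith
    ext <;> dsimp
    · rw [hτ, div_eq_one_iff_eq hd]; ring
    · rw [hτ]; ring
  · ext <;> dsimp
    · rw [div_eq_one_iff_eq hd]; ring
    · ring

lemma psiInv_left {s v : ℝ} (hs : 0 ≤ s) (h0 : 0 ≤ v) (h1 : v ≤ 1) :
    psiInv s (0, v) = (0, v) := by
  unfold psiInv
  rw [if_pos (by dsimp only; linarith)]
  simp

lemma psiInv_right {s v : ℝ} (hs : 0 ≤ s) (h0 : 0 ≤ v) (h1 : v ≤ 1) :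
    psiInv s (1, v) = (1, v + s) := by
  unfold psiInv
  dsimp only
  split_ifs with hA hB
  · have hv : v = 0 := by nlinarith
    have hs0 : s = 0 := by nlinarith
    rw [hv, hs0]; norm_num
  · have hv : v = 0 := by nlinarith
    rw [hv]; ext <;> dsimp <;> ring
  · ext <;> dsimp <;> ring

/-! ### the global straightening map -/

variable (n m : ℕ)

/-- The global straightening map. -/
def F (p : ℝ × ℝ) : ℝ × ℝ :=
  if p.1 < (⌈p.1 / (m : ℝ)⌉ : ℝ) * m - 1 then (p.1, p.2 - Yr n ⌈p.1 / (m : ℝ)⌉)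
  else
    (((⌈p.1 / (m : ℝ)⌉ : ℝ) * m - 1) +
        (psi (Sr n ⌈p.1 / (m : ℝ)⌉)
          (p.1 - ((⌈p.1 / (m : ℝ)⌉ : ℝ) * m - 1), p.2 - Yr n ⌈p.1 / (m : ℝ)⌉)).1,
      (psi (Sr n ⌈p.1 / (m : ℝ)⌉)
          (p.1 - ((⌈p.1 / (m : ℝ)⌉ : ℝ) * m - 1), p.2 - Yr n ⌈p.1 / (m : ℝ)⌉)).2)

def Finv (q : ℝ × ℝ) : ℝ × ℝ :=
  if q.1 < (⌈q.1 / (m : ℝ)⌉ : ℝ) * m - 1 then (q.1, q.2 + Yr n ⌈q.1 / (m : ℝ)⌉)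
  else
    (((⌈q.1 / (m : ℝ)⌉ : ℝ) * m - 1) +
        (psiInv (Sr n ⌈q.1 / (m : ℝ)⌉) (q.1 - ((⌈q.1 / (m : ℝ)⌉ : ℝ) * m - 1), q.2)).1,
      Yr n ⌈q.1 / (m : ℝ)⌉ +
        (psiInv (Sr n ⌈q.1 / (m : ℝ)⌉) (q.1 - ((⌈q.1 / (m : ℝ)⌉ : ℝ) * m - 1), q.2)).2)

/-- source bar piece -/
def BarP (i : ℕ) : Set (ℝ × ℝ) :=
  Icc (((i : ℝ) - 1) * m) ((i : ℝ) * m - 1) ×ˢ Icc (Yr n i) (Yr n i + 1)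

/-- source column piece -/
def Box (i : ℕ) : Set (ℝ × ℝ) :=
  Icc ((i : ℝ) * m - 1) ((i : ℝ) * m) ×ˢ Icc (Yr n i) (Yr n (i + 1) + 1)

/-- target bar slab -/
def RB (i : ℕ) : Set (ℝ × ℝ) :=
  Icc (((i : ℝ) - 1) * m) ((i : ℝ) * m - 1) ×ˢ Icc (0 : ℝ) 1

/-- target column slab -/
def RC (i : ℕ) : Set (ℝ × ℝ) :=
  Icc ((i : ℝ) * m - 1) ((i : ℝ) * m) ×ˢ Icc (0 : ℝ) 1

/-- the target rectangle -/
def Rect : Set (ℝ × ℝ) := Icc (0 : ℝ) ((2 ^ n : ℕ) * m) ×ˢ Icc (0 : ℝ) 1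

lemma Yr_step {i : ℕ} : Yr n (i : ℤ) = Yr n ((i : ℤ) - 1) + Sr n ((i : ℤ) - 1) := by
  unfold Sr; rw [show (i : ℤ) - 1 + 1 = (i : ℤ) by ring]; ring

lemma Sr_natCast (i : ℕ) : Sr n ((i : ℕ) : ℤ) = Yr n ((i : ℤ) + 1) - Yr n (i : ℤ) := rfl

lemma F_apply_bar (hm : 2 ≤ m) {i : ℕ} (hi1 : 1 ≤ i) {p : ℝ × ℝ}
    (hp : p ∈ BarP n m i) : F n m p = (p.1, p.2 - Yr n (i : ℤ)) := by
  obtain ⟨hx, hy⟩ := hp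
  simp only [mem_Icc] at hx hy
  have hm0 : (0 : ℝ) < m := by exact_mod_cast Nat.pos_of_ne_zero (by omega)
  have hm1 : (2 : ℝ) ≤ m := by exact_mod_cast hm
  rcases eq_or_lt_of_le hx.1 with heq | hlt
  · -- `p.1 = (i-1) m`:  handled by column `i-1`
    have hk : ⌈p.1 / (m : ℝ)⌉ = (i : ℤ) - 1 := by
      apply ceil_div_eq hm <;> push_cast <;> nlinarith [heq]
    have hs : 0 ≤ Sr n ((i : ℤ) - 1) := Sr_nonneg n _
    have hYr : Yr n (i : ℤ) = Yr n ((i : ℤ) - 1) + Sr n ((i : ℤ) - 1) := Yr_step n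
    unfold F
    rw [hk]
    rw [if_neg (by push_cast; nlinarith [heq])]
    have harg : (p.1 - ((((i : ℤ) - 1 : ℤ) : ℝ) * m - 1), p.2 - Yr n ((i : ℤ) - 1)) =
        (1, (p.2 - Yr n (i : ℤ)) + Sr n ((i : ℤ) - 1)) := by
      ext <;> dsimp <;> push_cast <;> nlinarith [heq]
    rw [harg, psi_right hs (by linarith) (by linarith)]
    ext <;> dsimp <;> push_cast <;> nlinarith [heq]
  · have hk : ⌈p.1 / (m : ℝ)⌉ = (i : ℤ) := by
      apply ceil_div_eq hm <;> push_cast <;> nlinarith [hx.2]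
    unfold F
    rw [hk]
    rcases lt_or_ge p.1 ((i : ℝ) * m - 1) with hcase | hcase
    · rw [if_pos (by push_cast; exact hcase)]
    · have hx1 : p.1 = (i : ℝ) * m - 1 := le_antisymm hx.2 hcase
      rw [if_neg (by push_cast; linarith)]
      have harg : (p.1 - ((((i : ℤ)) : ℤ) : ℝ) * m + 1, p.2 - Yr n (i : ℤ)) =
          ((0 : ℝ), p.2 - Yr n (i : ℤ)) := by
        ext <;> dsimp <;> push_cast <;> linarith
      have harg2 : (p.1 - (((((i : ℤ)) : ℤ) : ℝ) * m - 1), p.2 - Yr n (i : ℤ)) =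
          ((0 : ℝ), p.2 - Yr n (i : ℤ)) := by
        ext <;> dsimp <;> push_cast <;> linarith
      rw [harg2, psi_left (Sr_nonneg n _) (by linarith) (by linarith)]
      ext <;> dsimp <;> push_cast <;> linarith

lemma F_apply_box (hm : 2 ≤ m) {i : ℕ} (hi1 : 1 ≤ i) {p : ℝ × ℝ}
    (hp : p ∈ Box n m i) :
    F n m p = (((i : ℝ) * m - 1) + (psi (Sr n (i : ℤ)) (p.1 - ((i : ℝ) * m - 1), p.2 - Yr n (i : ℤ))).1,
      (psi (Sr n (i : ℤ)) (p.1 - ((i : ℝ) * m - 1), p.2 - Yr n (i : ℤ))).2) := by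
  obtain ⟨hx, hy⟩ := hp
  simp only [mem_Icc] at hx hy
  have hm0 : (0 : ℝ) < m := by exact_mod_cast Nat.pos_of_ne_zero (by omega)
  have hm1 : (2 : ℝ) ≤ m := by exact_mod_cast hm
  have hi1' : (1 : ℝ) ≤ i := by exact_mod_cast hi1
  have hk : ⌈p.1 / (m : ℝ)⌉ = (i : ℤ) := by
    apply ceil_div_eq hm <;> push_cast <;> nlinarith [hx.1, hx.2]
  unfold F
  rw [hk]
  rw [if_neg (by push_cast; linarith [hx.1])]
  push_cast
  rfl

lemma Finv_apply_RB (hm : 2 ≤ m) {i : ℕ} (hi1 : 1 ≤ i) {q : ℝ × ℝ}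
    (hq : q ∈ RB m i) : Finv n m q = (q.1, q.2 + Yr n (i : ℤ)) := by
  obtain ⟨hx, hy⟩ := hq
  simp only [mem_Icc] at hx hy
  have hm0 : (0 : ℝ) < m := by exact_mod_cast Nat.pos_of_ne_zero (by omega)
  have hm1 : (2 : ℝ) ≤ m := by exact_mod_cast hm
  rcases eq_or_lt_of_le hx.1 with heq | hlt
  · have hk : ⌈q.1 / (m : ℝ)⌉ = (i : ℤ) - 1 := by
      apply ceil_div_eq hm <;> push_cast <;> nlinarith [heq]
    have hs : 0 ≤ Sr n ((i : ℤ) - 1) := Sr_nonneg n _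
    have hYr : Yr n (i : ℤ) = Yr n ((i : ℤ) - 1) + Sr n ((i : ℤ) - 1) := Yr_step n
    unfold Finv
    rw [hk]
    rw [if_neg (by push_cast; nlinarith [heq])]
    have harg : (q.1 - ((((i : ℤ) - 1 : ℤ) : ℝ) * m - 1), q.2) = ((1 : ℝ), q.2) := by
      ext <;> dsimp <;> push_cast <;> nlinarith [heq]
    rw [harg, psiInv_right hs (by linarith) (by linarith)]
    ext <;> dsimp <;> push_cast <;> nlinarith [heq]
  · have hk : ⌈q.1 / (m : ℝ)⌉ = (i : ℤ) := by
      apply ceil_div_eq hm <;> push_cast <;> nlinarith [hx.2]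
    unfold Finv
    rw [hk]
    rcases lt_or_ge q.1 ((i : ℝ) * m - 1) with hcase | hcase
    · rw [if_pos (by push_cast; exact hcase)]
    · have hx1 : q.1 = (i : ℝ) * m - 1 := le_antisymm hx.2 hcase
      rw [if_neg (by push_cast; linarith)]
      have harg : (q.1 - (((((i : ℤ)) : ℤ) : ℝ) * m - 1), q.2) = ((0 : ℝ), q.2) := by
        ext <;> dsimp <;> push_cast <;> linarith
      rw [harg, psiInv_left (Sr_nonneg n _) (by linarith) (by linarith)]
      ext <;> dsimp <;> push_cast <;> linarith

lemma Finv_apply_RC (hm : 2 ≤ m) {i : ℕ} (hi1 : 1 ≤ i) {q : ℝ × ℝ}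
    (hq : q ∈ RC m i) :
    Finv n m q = (((i : ℝ) * m - 1) + (psiInv (Sr n (i : ℤ)) (q.1 - ((i : ℝ) * m - 1), q.2)).1,
      Yr n (i : ℤ) + (psiInv (Sr n (i : ℤ)) (q.1 - ((i : ℝ) * m - 1), q.2)).2) := by
  obtain ⟨hx, hy⟩ := hq
  simp only [mem_Icc] at hx hy
  have hm0 : (0 : ℝ) < m := by exact_mod_cast Nat.pos_of_ne_zero (by omega)
  have hm1 : (2 : ℝ) ≤ m := by exact_mod_cast hm
  have hi1' : (1 : ℝ) ≤ i := by exact_mod_cast hi1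
  have hk : ⌈q.1 / (m : ℝ)⌉ = (i : ℤ) := by
    apply ceil_div_eq hm <;> push_cast <;> nlinarith [hx.1, hx.2]
  unfold Finv
  rw [hk]
  rw [if_neg (by push_cast; linarith [hx.1])]
  push_cast
  rfl

lemma box_arg_mem {i : ℕ} {p : ℝ × ℝ} (hp : p ∈ Box n m i) :
    InBox (Sr n (i : ℤ)) (p.1 - ((i : ℝ) * m - 1), p.2 - Yr n (i : ℤ)) := by
  obtain ⟨hx, hy⟩ := hp
  simp only [mem_Icc] at hx hy
  have hstep := Sr_natCast n i
  exact ⟨by dsimp; linarith [hx.1], by dsimp; linarith [hx.2], by dsimp; linarith [hy.1],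
    by dsimp; linarith [hy.2]⟩

lemma rc_arg_mem {i : ℕ} {q : ℝ × ℝ} (hq : q ∈ RC m i) :
    InSq (q.1 - ((i : ℝ) * m - 1), q.2) := by
  obtain ⟨hx, hy⟩ := hq
  simp only [mem_Icc] at hx hy
  exact ⟨by dsimp; linarith [hx.1], by dsimp; linarith [hx.2], by dsimp; linarith [hy.1],
    by dsimp; linarith [hy.2]⟩

lemma F_mem_RB (hm : 2 ≤ m) {i : ℕ} (hi1 : 1 ≤ i) {p : ℝ × ℝ}
    (hp : p ∈ BarP n m i) : F n m p ∈ RB m i := by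
  rw [F_apply_bar n m hm hi1 hp]
  obtain ⟨hx, hy⟩ := hp
  simp only [mem_Icc] at hx hy
  refine ⟨by simpa using hx, ?_⟩
  simp only [mem_Icc]
  constructor <;> linarith [hy.1, hy.2]

lemma F_mem_RC (hm : 2 ≤ m) {i : ℕ} (hi1 : 1 ≤ i) {p : ℝ × ℝ}
    (hp : p ∈ Box n m i) : F n m p ∈ RC m i := by
  rw [F_apply_box n m hm hi1 hp]
  have hq := psi_mem (Sr_nonneg n (i : ℤ)) (box_arg_mem n m hp)
  obtain ⟨h0, h1, h2, h3⟩ := hq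
  exact ⟨by simp only [mem_Icc]; constructor <;> linarith,
    by simp only [mem_Icc]; exact ⟨h2, h3⟩⟩

lemma Finv_mem_BarP (hm : 2 ≤ m) {i : ℕ} (hi1 : 1 ≤ i) {q : ℝ × ℝ}
    (hq : q ∈ RB m i) : Finv n m q ∈ BarP n m i := by
  rw [Finv_apply_RB n m hm hi1 hq]
  obtain ⟨hx, hy⟩ := hq
  simp only [mem_Icc] at hx hy
  refine ⟨by simpa using hx, ?_⟩
  simp only [mem_Icc]
  constructor <;> linarith [hy.1, hy.2]

lemma Finv_mem_Box (hm : 2 ≤ m) {i : ℕ} (hi1 : 1 ≤ i) {q : ℝ × ℝ}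
    (hq : q ∈ RC m i) : Finv n m q ∈ Box n m i := by
  rw [Finv_apply_RC n m hm hi1 hq]
  have hp := psiInv_mem (Sr_nonneg n (i : ℤ)) (rc_arg_mem m hq)
  obtain ⟨h0, h1, h2, h3⟩ := hp
  have hstep := Sr_natCast n i
  exact ⟨by simp only [mem_Icc]; constructor <;> linarith,
    by simp only [mem_Icc]; constructor <;> linarith⟩

lemma Finv_F_bar (hm : 2 ≤ m) {i : ℕ} (hi1 : 1 ≤ i) {p : ℝ × ℝ}
    (hp : p ∈ BarP n m i) : Finv n m (F n m p) = p := by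
  have hmem := F_mem_RB n m hm hi1 hp
  rw [F_apply_bar n m hm hi1 hp] at hmem ⊢
  rw [Finv_apply_RB n m hm hi1 hmem]
  ext <;> dsimp <;> ring

lemma Finv_F_box (hm : 2 ≤ m) {i : ℕ} (hi1 : 1 ≤ i) {p : ℝ × ℝ}
    (hp : p ∈ Box n m i) : Finv n m (F n m p) = p := by
  have harg := box_arg_mem n m hp
  have hmem := F_mem_RC n m hm hi1 hp
  rw [F_apply_box n m hm hi1 hp] at hmem ⊢
  rw [Finv_apply_RC n m hm hi1 hmem]
  have hsimp : ((((i : ℝ) * m - 1) +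
      (psi (Sr n (i : ℤ)) (p.1 - ((i : ℝ) * m - 1), p.2 - Yr n (i : ℤ))).1) - ((i : ℝ) * m - 1),
      (psi (Sr n (i : ℤ)) (p.1 - ((i : ℝ) * m - 1), p.2 - Yr n (i : ℤ))).2) =
      psi (Sr n (i : ℤ)) (p.1 - ((i : ℝ) * m - 1), p.2 - Yr n (i : ℤ)) := by
    rw [add_sub_cancel_left]
  rw [hsimp, psiInv_psi (Sr_nonneg n (i : ℤ)) harg]
  ext <;> dsimp <;> ring

lemma F_Finv_RB (hm : 2 ≤ m) {i : ℕ} (hi1 : 1 ≤ i) {q : ℝ × ℝ}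
    (hq : q ∈ RB m i) : F n m (Finv n m q) = q := by
  have hmem := Finv_mem_BarP n m hm hi1 hq
  rw [Finv_apply_RB n m hm hi1 hq] at hmem ⊢
  rw [F_apply_bar n m hm hi1 hmem]
  ext <;> dsimp <;> ring

lemma F_Finv_RC (hm : 2 ≤ m) {i : ℕ} (hi1 : 1 ≤ i) {q : ℝ × ℝ}
    (hq : q ∈ RC m i) : F n m (Finv n m q) = q := by
  have harg := rc_arg_mem m hq
  have hmem := Finv_mem_Box n m hm hi1 hq
  rw [Finv_apply_RC n m hm hi1 hq] at hmem ⊢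
  rw [F_apply_box n m hm hi1 hmem]
  have hsimp : ((((i : ℝ) * m - 1) +
      (psiInv (Sr n (i : ℤ)) (q.1 - ((i : ℝ) * m - 1), q.2)).1) - ((i : ℝ) * m - 1),
      Yr n (i : ℤ) + (psiInv (Sr n (i : ℤ)) (q.1 - ((i : ℝ) * m - 1), q.2)).2 - Yr n (i : ℤ)) =
      psiInv (Sr n (i : ℤ)) (q.1 - ((i : ℝ) * m - 1), q.2) := by
    ext <;> dsimp <;> ring
  rw [hsimp, psi_psiInv (Sr_nonneg n (i : ℤ)) harg]
  ext <;> dsimp <;> ring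



lemma Dregion_eq (hm : 2 ≤ m) :
    Dregion n m =
      (⋃ i ∈ Finset.Icc 1 (2 ^ n), BarP n m i) ∪ ⋃ i ∈ Finset.Icc 1 (2 ^ n), Box n m i := by
  have hm1 : (1 : ℝ) ≤ m := by exact_mod_cast (by omega : 1 ≤ m)
  have hpow : 1 ≤ 2 ^ n := Nat.one_le_two_pow
  apply Subset.antisymm
  · rintro p (hp | hp) <;>
      simp only [mem_iUnion, Finset.mem_Icc, exists_prop] at hp <;>
      obtain ⟨i, ⟨hi1, hiN⟩, hmem⟩ := hp <;>
      simp only [mem_union, mem_iUnion, Finset.mem_Icc, exists_prop]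
    · -- bars
      obtain ⟨hx, hy⟩ := hmem
      simp only [mem_Icc] at hx hy
      have hYi : Yr n (i : ℤ) = (yCoord i : ℝ) := Yr_natCast n i hiN
      rcases le_or_gt p.1 ((i : ℝ) * m - 1) with h | h
      · exact Or.inl ⟨i, ⟨hi1, hiN⟩, ⟨by simp only [mem_Icc]; exact ⟨hx.1, h⟩,
          by simp only [mem_Icc, hYi]; exact hy⟩⟩
      · refine Or.inr ⟨i, ⟨hi1, hiN⟩, ⟨by simp only [mem_Icc]; exact ⟨h.le, hx.2⟩, ?_⟩⟩
        have hmono := Yr_mono n (by omega : (i : ℤ) ≤ (i : ℤ) + 1)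
        rw [hYi] at hmono
        simp only [mem_Icc, hYi]
        exact ⟨hy.1, by linarith [hy.2]⟩
    · -- connectors
      obtain ⟨hx, hy⟩ := hmem
      simp only [mem_Icc] at hx hy
      have hiN' : i ≤ 2 ^ n := by omega
      have hi1N : i + 1 ≤ 2 ^ n := by omega
      have hYi : Yr n (i : ℤ) = (yCoord i : ℝ) := Yr_natCast n i hiN'
      have hYi1 : Yr n ((i : ℤ) + 1) = (yCoord (i + 1) : ℝ) := by
        rw [show (i : ℤ) + 1 = ((i + 1 : ℕ) : ℤ) by push_cast; ring]
        exact Yr_natCast n (i + 1) hi1N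
      refine Or.inr ⟨i, ⟨hi1, hiN'⟩, ⟨by simp only [mem_Icc]; exact hx, ?_⟩⟩
      simp only [mem_Icc, hYi, hYi1]
      exact ⟨by linarith [hy.1], hy.2⟩
  · rintro p (hp | hp) <;>
      simp only [mem_iUnion, Finset.mem_Icc, exists_prop] at hp <;>
      obtain ⟨i, ⟨hi1, hiN⟩, hmem⟩ := hp <;>
      obtain ⟨hx, hy⟩ := hmem <;>
      simp only [mem_Icc] at hx hy <;>
      have hYi : Yr n (i : ℤ) = (yCoord i : ℝ) := Yr_natCast n i hiN
    · -- BarP i ⊆ bar i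
      left
      simp only [mem_iUnion, Finset.mem_Icc, exists_prop]
      exact ⟨i, ⟨hi1, hiN⟩, ⟨by simp only [mem_Icc]; exact ⟨hx.1, by linarith [hx.2]⟩,
        by simp only [mem_Icc, ← hYi]; exact hy⟩⟩
    · -- Box i ⊆ bar i ∪ connector i
      rcases le_or_gt p.2 ((yCoord i : ℝ) + 1) with h | h
      · left
        simp only [mem_iUnion, Finset.mem_Icc, exists_prop]
        refine ⟨i, ⟨hi1, hiN⟩, ⟨by simp only [mem_Icc]; constructor <;> nlinarith [hx.1, hx.2],
          by simp only [mem_Icc, ← hYi]; exact ⟨hy.1, by rw [hYi]; exact h⟩⟩⟩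
      · have hilt : i < 2 ^ n := by
          rcases Nat.lt_or_ge i (2 ^ n) with h' | h'
          · exact h'
          · exfalso
            have hieq : i = 2 ^ n := le_antisymm hiN h'
            have : Yr n ((i : ℤ) + 1) = Yr n (i : ℤ) := by
              rw [hieq, Yr_of_ge n (by push_cast; omega), Yr, show ((2 ^ n : ℕ) : ℤ).toNat = 2 ^ n by omega, min_self]
            rw [this, hYi] at hy
            linarith [hy.2]
        have hi1N : i + 1 ≤ 2 ^ n := by omega
        have hYi1 : Yr n ((i : ℤ) + 1) = (yCoord (i + 1) : ℝ) := by
          rw [show (i : ℤ) + 1 = ((i + 1 : ℕ) : ℤ) by push_cast; ring]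
          exact Yr_natCast n (i + 1) hi1N
        right
        simp only [mem_iUnion, Finset.mem_Icc, exists_prop]
        exact ⟨i, ⟨hi1, by omega⟩, ⟨by simp only [mem_Icc]; exact hx,
          by simp only [mem_Icc]; exact ⟨h.le, by rw [← hYi1]; exact hy.2⟩⟩⟩

lemma RB_subset_Rect {i : ℕ} (hi1 : 1 ≤ i) (hiN : i ≤ 2 ^ n) (hm : 2 ≤ m) :
    RB m i ⊆ Rect n m := by
  have hm1 : (1 : ℝ) ≤ m := by exact_mod_cast (by omega : 1 ≤ m)
  have hi1' : (1 : ℝ) ≤ i := by exact_mod_cast hi1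
  have hiN' : (i : ℝ) ≤ (2 ^ n : ℕ) := by exact_mod_cast hiN
  rintro p ⟨hx, hy⟩
  simp only [mem_Icc] at hx hy
  refine ⟨?_, hy⟩
  simp only [mem_Icc]
  constructor
  · nlinarith [hx.1]
  · nlinarith [hx.2]

lemma RC_subset_Rect {i : ℕ} (hi1 : 1 ≤ i) (hiN : i ≤ 2 ^ n) (hm : 2 ≤ m) :
    RC m i ⊆ Rect n m := by
  have hm1 : (1 : ℝ) ≤ m := by exact_mod_cast (by omega : 1 ≤ m)
  have hi1' : (1 : ℝ) ≤ i := by exact_mod_cast hi1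
  have hiN' : (i : ℝ) ≤ (2 ^ n : ℕ) := by exact_mod_cast hiN
  rintro p ⟨hx, hy⟩
  simp only [mem_Icc] at hx hy
  refine ⟨?_, hy⟩
  simp only [mem_Icc]
  constructor
  · nlinarith [hx.1]
  · nlinarith [hx.2]

lemma Rect_eq (hm : 2 ≤ m) :
    Rect n m =
      (⋃ i ∈ Finset.Icc 1 (2 ^ n), RB m i) ∪ ⋃ i ∈ Finset.Icc 1 (2 ^ n), RC m i := by
  have hm0 : (0 : ℝ) < m := by exact_mod_cast Nat.pos_of_ne_zero (by omega)
  have hm1 : (1 : ℝ) ≤ m := by exact_mod_cast (by omega : 1 ≤ m)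
  apply Subset.antisymm
  · rintro q ⟨hx, hy⟩
    simp only [mem_Icc] at hx hy
    simp only [mem_union, mem_iUnion, Finset.mem_Icc, exists_prop]
    set k : ℤ := ⌈q.1 / (m : ℝ)⌉ with hkdef
    have hk0 : 0 ≤ k := Int.ceil_nonneg (div_nonneg hx.1 hm0.le)
    have hkN : k ≤ (2 ^ n : ℕ) := by
      rw [hkdef]
      apply Int.ceil_le.mpr
      rw [div_le_iff₀ hm0]
      exact_mod_cast hx.2
    by_cases hk : k = 0
    · -- q.1 = 0
      have hq10 : q.1 ≤ 0 := by
        have := Int.ceil_le.mp (le_of_eq hk)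
        rw [div_le_iff₀ hm0] at this
        simpa using this
      have hq1 : q.1 = 0 := le_antisymm hq10 hx.1
      left
      refine ⟨1, ⟨le_rfl, Nat.one_le_two_pow⟩, ⟨?_, ?_⟩⟩
      · simp only [mem_Icc, hq1]
        push_cast
        constructor <;> linarith
      · simp only [mem_Icc]
        exact hy
    · have hk1 : 1 ≤ k := by omega
      set i : ℕ := k.toNat with hidef
      have hik : (i : ℤ) = k := Int.toNat_of_nonneg hk0
      have hi1 : 1 ≤ i := by omega
      have hiN : i ≤ 2 ^ n := by omega
      have hikR : (i : ℝ) = (k : ℝ) := by exact_mod_cast hik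
      have hlow : ((k : ℝ) - 1) * m < q.1 := by
        have : ((k - 1 : ℤ) : ℝ) < q.1 / m := Int.lt_ceil.mp (by omega)
        rw [lt_div_iff₀ hm0] at this
        push_cast at this
        linarith
      have hhigh : q.1 ≤ (k : ℝ) * m := by
        have : q.1 / m ≤ (k : ℝ) := Int.le_ceil _
        rwa [div_le_iff₀ hm0] at this
      rcases le_or_gt q.1 ((k : ℝ) * m - 1) with h | h
      · exact Or.inl ⟨i, ⟨hi1, hiN⟩, by
          simp only [RB, mem_prod, mem_Icc, hikR]
          exact ⟨⟨by linarith, h⟩, hy⟩⟩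
      · exact Or.inr ⟨i, ⟨hi1, hiN⟩, by
          simp only [RC, mem_prod, mem_Icc, hikR]
          exact ⟨⟨h.le, hhigh⟩, hy⟩⟩
  · rintro q (hq | hq) <;> simp only [mem_iUnion, Finset.mem_Icc, exists_prop] at hq <;>
      obtain ⟨i, ⟨hi1, hiN⟩, hmem⟩ := hq
    · exact RB_subset_Rect n m hi1 hiN hm hmem
    · exact RC_subset_Rect n m hi1 hiN hm hmem

lemma F_mem_Rect (hm : 2 ≤ m) {p : ℝ × ℝ} (hp : p ∈ Dregion n m) :
    F n m p ∈ Rect n m := by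
  rw [Dregion_eq n m hm] at hp
  rcases hp with hp | hp <;> simp only [mem_iUnion, Finset.mem_Icc, exists_prop] at hp <;>
    obtain ⟨i, ⟨hi1, hiN⟩, hmem⟩ := hp
  · exact RB_subset_Rect n m hi1 hiN hm (F_mem_RB n m hm hi1 hmem)
  · exact RC_subset_Rect n m hi1 hiN hm (F_mem_RC n m hm hi1 hmem)

lemma Finv_mem_Dregion (hm : 2 ≤ m) {q : ℝ × ℝ} (hq : q ∈ Rect n m) :
    Finv n m q ∈ Dregion n m := by
  rw [Rect_eq n m hm] at hq
  rw [Dregion_eq n m hm]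
  rcases hq with hq | hq <;> simp only [mem_iUnion, Finset.mem_Icc, exists_prop] at hq <;>
    obtain ⟨i, ⟨hi1, hiN⟩, hmem⟩ := hq <;>
    simp only [mem_union, mem_iUnion, Finset.mem_Icc, exists_prop]
  · exact Or.inl ⟨i, ⟨hi1, hiN⟩, Finv_mem_BarP n m hm hi1 hmem⟩
  · exact Or.inr ⟨i, ⟨hi1, hiN⟩, Finv_mem_Box n m hm hi1 hmem⟩

lemma Finv_F (hm : 2 ≤ m) {p : ℝ × ℝ} (hp : p ∈ Dregion n m) :
    Finv n m (F n m p) = p := by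
  rw [Dregion_eq n m hm] at hp
  rcases hp with hp | hp <;> simp only [mem_iUnion, Finset.mem_Icc, exists_prop] at hp <;>
    obtain ⟨i, ⟨hi1, hiN⟩, hmem⟩ := hp
  · exact Finv_F_bar n m hm hi1 hmem
  · exact Finv_F_box n m hm hi1 hmem

lemma F_Finv (hm : 2 ≤ m) {q : ℝ × ℝ} (hq : q ∈ Rect n m) :
    F n m (Finv n m q) = q := by
  rw [Rect_eq n m hm] at hq
  rcases hq with hq | hq <;> simp only [mem_iUnion, Finset.mem_Icc, exists_prop] at hq <;>
    obtain ⟨i, ⟨hi1, hiN⟩, hmem⟩ := hq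
  · exact F_Finv_RB n m hm hi1 hmem
  · exact F_Finv_RC n m hm hi1 hmem

/-! ### continuity of `F` on the region -/

lemma continuousOn_union_closed {α β : Type*} [TopologicalSpace α] [TopologicalSpace β]
    {f : α → β} {s t : Set α} (hs : IsClosed s) (ht : IsClosed t)
    (hfs : ContinuousOn f s) (hft : ContinuousOn f t) : ContinuousOn f (s ∪ t) := by
  intro x hx
  rcases hx with h | h
  · refine (hfs x h).union ?_
    by_cases hxt : x ∈ t
    · exact hft x hxt
    · exact continuousWithinAt_of_notMem_closure (by rwa [ht.closure_eq])
  · refine ContinuousWithinAt.union ?_ (hft x h)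
    by_cases hxs : x ∈ s
    · exact hfs x hxs
    · exact continuousWithinAt_of_notMem_closure (by rwa [hs.closure_eq])

lemma continuousOn_biUnion_closed {α β : Type*} [TopologicalSpace α] [TopologicalSpace β]
    {f : α → β} {ι : Type*} [DecidableEq ι] (t : Finset ι) (E : ι → Set α)
    (hcl : ∀ i ∈ t, IsClosed (E i)) (hc : ∀ i ∈ t, ContinuousOn f (E i)) :
    ContinuousOn f (⋃ i ∈ t, E i) := by
  induction t using Finset.induction_on with
  | empty => simp
  | insert a t' ha ih =>
    rw [Finset.set_biUnion_insert]
    exact continuousOn_union_closed (hcl a (Finset.mem_insert_self a t'))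
      (Set.Finite.isClosed_biUnion t'.finite_toSet
        (fun i hi => hcl i (Finset.mem_insert_of_mem hi)))
      (hc a (Finset.mem_insert_self a t'))
      (ih (fun i hi => hcl i (Finset.mem_insert_of_mem hi))
        (fun i hi => hc i (Finset.mem_insert_of_mem hi)))

lemma continuousOn_F (hm : 2 ≤ m) : ContinuousOn (F n m) (Dregion n m) := by
  rw [Dregion_eq n m hm]
  apply continuousOn_union_closed
  · exact Set.Finite.isClosed_biUnion (Finset.finite_toSet _)
      (fun i _ => (isClosed_Icc.prod isClosed_Icc))
  · exact Set.Finite.isClosed_biUnion (Finset.finite_toSet _)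
      (fun i _ => (isClosed_Icc.prod isClosed_Icc))
  · apply continuousOn_biUnion_closed _ _ (fun i _ => isClosed_Icc.prod isClosed_Icc)
    intro i hi
    simp only [Finset.mem_Icc] at hi
    apply ContinuousOn.congr (f := fun p : ℝ × ℝ => (p.1, p.2 - Yr n (i : ℤ)))
    · exact (continuous_fst.prodMk (continuous_snd.sub continuous_const)).continuousOn
    · intro p hp
      exact F_apply_bar n m hm hi.1 hp
  · apply continuousOn_biUnion_closed _ _ (fun i _ => isClosed_Icc.prod isClosed_Icc)
    intro i hi
    simp only [Finset.mem_Icc] at hi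
    have hψ : Continuous (fun p : ℝ × ℝ =>
        psi (Sr n (i : ℤ)) (p.1 - ((i : ℝ) * m - 1), p.2 - Yr n (i : ℤ))) :=
      (continuous_psi (Sr_nonneg n (i : ℤ))).comp
        ((continuous_fst.sub continuous_const).prodMk (continuous_snd.sub continuous_const))
    apply ContinuousOn.congr
      (f := fun p : ℝ × ℝ => (((i : ℝ) * m - 1) +
        (psi (Sr n (i : ℤ)) (p.1 - ((i : ℝ) * m - 1), p.2 - Yr n (i : ℤ))).1,
        (psi (Sr n (i : ℤ)) (p.1 - ((i : ℝ) * m - 1), p.2 - Yr n (i : ℤ))).2))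
    · exact ((continuous_const.add hψ.fst).prodMk hψ.snd).continuousOn
    · intro p hp
      exact F_apply_box n m hm hi.1 hp

lemma isCompact_Dregion : IsCompact (Dregion n m) := by
  apply IsCompact.union <;>
    exact Set.Finite.isCompact_biUnion (Finset.finite_toSet _)
      (fun i _ => isCompact_Icc.prod isCompact_Icc)

lemma isCompact_Rect : IsCompact (Rect n m) := isCompact_Icc.prod isCompact_Icc

/-- The region is homeomorphic to the rectangle. -/
def rectHomeo (hm : 2 ≤ m) : (Dregion n m) ≃ₜ (Rect n m) := by
  haveI : CompactSpace (Dregion n m) := isCompact_iff_compactSpace.mp (isCompact_Dregion n m)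
  refine Continuous.homeoOfEquivCompactToT2
    (f := ⟨fun p => ⟨F n m p.1, F_mem_Rect n m hm p.2⟩,
           fun q => ⟨Finv n m q.1, Finv_mem_Dregion n m hm q.2⟩, ?_, ?_⟩) ?_
  · intro p
    exact Subtype.ext (Finv_F n m hm p.2)
  · intro q
    exact Subtype.ext (F_Finv n m hm q.2)
  · exact Continuous.subtype_mk (continuousOn_F n m hm).restrict _

/-! ### from the rectangle to the closed disk -/

/-- euclidean norm on `ℝ × ℝ` -/
def sq2 (p : ℝ × ℝ) : ℝ := Real.sqrt (p.1 ^ 2 + p.2 ^ 2)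

lemma sq2_nonneg (p : ℝ × ℝ) : 0 ≤ sq2 p := Real.sqrt_nonneg _

lemma sq2_pos {p : ℝ × ℝ} (hp : p ≠ 0) : 0 < sq2 p := by
  apply Real.sqrt_pos.mpr
  have h : p.1 ≠ 0 ∨ p.2 ≠ 0 := by
    by_contra h
    push_neg at h
    exact hp (Prod.ext h.1 h.2)
  rcases h with h | h
  · have h1 : 0 < |p.1| := abs_pos.mpr h
    nlinarith [sq_nonneg p.2, sq_abs p.1]
  · have h1 : 0 < |p.2| := abs_pos.mpr h
    nlinarith [sq_nonneg p.1, sq_abs p.2]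

lemma norm_le_sq2 (p : ℝ × ℝ) : ‖p‖ ≤ sq2 p := by
  rw [Prod.norm_def]
  apply max_le <;> rw [Real.norm_eq_abs, ← Real.sqrt_sq_eq_abs] <;>
    apply Real.sqrt_le_sqrt <;> nlinarith [sq_nonneg p.1, sq_nonneg p.2]

lemma continuous_sq2 : Continuous sq2 :=
  Real.continuous_sqrt.comp ((continuous_fst.pow 2).add (continuous_snd.pow 2))

def radial (p : ℝ × ℝ) : ℝ × ℝ := (‖p‖ / sq2 p) • p

def radialInv (q : ℝ × ℝ) : ℝ × ℝ := (sq2 q / ‖q‖) • q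

lemma radial_zero : radial 0 = 0 := by simp [radial]

lemma radialInv_zero : radialInv 0 = 0 := by simp [radialInv]

lemma sq2_smul {c : ℝ} (hc : 0 ≤ c) (p : ℝ × ℝ) : sq2 (c • p) = c * sq2 p := by
  unfold sq2
  simp only [Prod.smul_fst, Prod.smul_snd, smul_eq_mul]
  rw [show (c * p.1) ^ 2 + (c * p.2) ^ 2 = c ^ 2 * (p.1 ^ 2 + p.2 ^ 2) by ring,
    Real.sqrt_mul (sq_nonneg c), Real.sqrt_sq hc]

lemma sq2_radial (p : ℝ × ℝ) : sq2 (radial p) = ‖p‖ := by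
  by_cases hp : p = 0
  · simp [hp, radial_zero, sq2]
  · unfold radial
    rw [sq2_smul (div_nonneg (norm_nonneg p) (sq2_nonneg p)) p,
      div_mul_cancel₀ _ (ne_of_gt (sq2_pos hp))]

lemma norm_radial_le (p : ℝ × ℝ) : ‖radial p‖ ≤ ‖p‖ := by
  unfold radial
  rw [norm_smul, Real.norm_eq_abs,
    abs_of_nonneg (div_nonneg (norm_nonneg _) (sq2_nonneg _))]
  by_cases hp : p = 0
  · simp [hp]
  · have h1 : ‖p‖ / sq2 p ≤ 1 := by
      rw [div_le_one (sq2_pos hp)]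
      exact norm_le_sq2 p
    nlinarith [norm_nonneg p]

lemma norm_radialInv (q : ℝ × ℝ) : ‖radialInv q‖ = sq2 q := by
  by_cases hq : q = 0
  · simp [hq, radialInv_zero, sq2]
  · unfold radialInv
    rw [norm_smul, Real.norm_eq_abs,
      abs_of_nonneg (div_nonneg (sq2_nonneg _) (norm_nonneg _)),
      div_mul_cancel₀ _ (norm_ne_zero_iff.mpr hq)]

lemma radialInv_radial (p : ℝ × ℝ) : radialInv (radial p) = p := by
  by_cases hp : p = 0
  · simp [hp, radial_zero, radialInv_zero]
  · have hs : (0 : ℝ) < sq2 p := sq2_pos hp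
    have hn : (0 : ℝ) < ‖p‖ := norm_pos_iff.mpr hp
    unfold radialInv radial
    rw [sq2_smul (by positivity) p, norm_smul, Real.norm_eq_abs,
      abs_of_nonneg (by positivity : (0:ℝ) ≤ ‖p‖ / sq2 p), smul_smul]
    have hco : ‖p‖ / sq2 p * sq2 p / (‖p‖ / sq2 p * ‖p‖) * (‖p‖ / sq2 p) = 1 := by
      field_simp
    rw [hco, one_smul]

lemma radial_radialInv (q : ℝ × ℝ) : radial (radialInv q) = q := by
  by_cases hq : q = 0
  · simp [hq, radial_zero, radialInv_zero]
  · have hs : (0 : ℝ) < sq2 q := sq2_pos hq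
    have hn : (0 : ℝ) < ‖q‖ := norm_pos_iff.mpr hq
    unfold radial radialInv
    rw [sq2_smul (by positivity) q, norm_smul, Real.norm_eq_abs,
      abs_of_nonneg (by positivity : (0:ℝ) ≤ sq2 q / ‖q‖), smul_smul]
    have hco : sq2 q / ‖q‖ * ‖q‖ / (sq2 q / ‖q‖ * sq2 q) * (sq2 q / ‖q‖) = 1 := by
      field_simp
    rw [hco, one_smul]

lemma continuous_radial : Continuous radial := by
  rw [continuous_iff_continuousAt]
  intro p
  by_cases hp : p = 0
  · subst hp
    rw [ContinuousAt, radial_zero]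
    exact squeeze_zero_norm norm_radial_le tendsto_norm_zero
  · exact ((continuous_norm.continuousAt.div continuous_sq2.continuousAt
      (ne_of_gt (sq2_pos hp))).smul continuousAt_id)

/-- `ℝ × ℝ` to `EuclideanSpace` -/
def toE2 (p : ℝ × ℝ) : EuclideanSpace ℝ (Fin 2) :=
  (PiLp.continuousLinearEquiv 2 ℝ (fun _ : Fin 2 => ℝ)).symm ![p.1, p.2]

def fromE2 (x : EuclideanSpace ℝ (Fin 2)) : ℝ × ℝ := (x 0, x 1)

lemma fromE2_toE2 (p : ℝ × ℝ) : fromE2 (toE2 p) = p := rfl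

lemma toE2_fromE2 (x : EuclideanSpace ℝ (Fin 2)) : toE2 (fromE2 x) = x := by
  ext j
  fin_cases j <;> rfl

lemma toE2_norm (p : ℝ × ℝ) : ‖toE2 p‖ = sq2 p := by
  rw [EuclideanSpace.norm_eq]
  have h0 : ∀ j : Fin 2, ‖toE2 p j‖ = ‖![p.1, p.2] j‖ := fun j => rfl
  rw [Fin.sum_univ_two, h0 0, h0 1]
  simp only [Matrix.cons_val_zero, Matrix.cons_val_one, Matrix.head_cons, Real.norm_eq_abs,
    sq_abs]
  rfl

lemma continuous_toE2 : Continuous toE2 := by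
  apply (PiLp.continuousLinearEquiv 2 ℝ (fun _ : Fin 2 => ℝ)).symm.continuous.comp
  apply continuous_pi
  intro i
  fin_cases i
  · simpa using continuous_fst
  · simpa using continuous_snd

variable (n m : ℕ)

def Lr : ℝ := ((2 ^ n : ℕ) : ℝ) * m

lemma Lr_pos (hm : 2 ≤ m) : 0 < Lr n m := by
  have h1 : (0 : ℝ) < ((2 ^ n : ℕ) : ℝ) := by positivity
  have h2 : (0 : ℝ) < (m : ℝ) := by exact_mod_cast Nat.pos_of_ne_zero (by omega)
  exact mul_pos h1 h2

def aff (p : ℝ × ℝ) : ℝ × ℝ := (p.1 * (2 / Lr n m) - 1, p.2 * 2 - 1)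

def affInv (p : ℝ × ℝ) : ℝ × ℝ := ((p.1 + 1) * (Lr n m / 2), (p.2 + 1) / 2)

lemma affInv_aff (hm : 2 ≤ m) (p : ℝ × ℝ) : affInv n m (aff n m p) = p := by
  have hL := Lr_pos n m hm
  unfold aff affInv
  ext <;> dsimp <;> field_simp <;> ring

lemma aff_affInv (hm : 2 ≤ m) (p : ℝ × ℝ) : aff n m (affInv n m p) = p := by
  have hL := Lr_pos n m hm
  unfold aff affInv
  ext <;> dsimp <;> field_simp <;> ring

lemma continuous_aff : Continuous (aff n m) := by
  unfold aff
  fun_prop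

lemma aff_mem (hm : 2 ≤ m) {q : ℝ × ℝ} (hq : q ∈ Rect n m) : ‖aff n m q‖ ≤ 1 := by
  have hL := Lr_pos n m hm
  obtain ⟨hx, hy⟩ := hq
  simp only [mem_Icc] at hx hy
  have hx2 : q.1 ≤ Lr n m := hx.2
  rw [Prod.norm_def]
  apply max_le <;> rw [Real.norm_eq_abs, abs_le] <;> unfold aff <;> constructor <;> dsimp
  · have : 0 ≤ q.1 * (2 / Lr n m) := mul_nonneg hx.1 (by positivity)
    linarith
  · have : q.1 * (2 / Lr n m) ≤ Lr n m * (2 / Lr n m) :=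
      mul_le_mul_of_nonneg_right hx2 (by positivity)
    rw [mul_div_cancel₀ _ (ne_of_gt hL)] at this
    linarith
  · linarith [hy.1]
  · linarith [hy.2]

lemma affInv_mem (hm : 2 ≤ m) {p : ℝ × ℝ} (hp : ‖p‖ ≤ 1) : affInv n m p ∈ Rect n m := by
  have hL := Lr_pos n m hm
  rw [Prod.norm_def] at hp
  have h1 : |p.1| ≤ 1 := le_trans (le_max_left _ _) hp
  have h2 : |p.2| ≤ 1 := le_trans (le_max_right _ _) hp
  rw [abs_le] at h1 h2
  refine ⟨?_, ?_⟩ <;> simp only [mem_Icc] <;> unfold affInv <;> constructor <;> dsimp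
  · have : 0 ≤ p.1 + 1 := by linarith [h1.1]
    positivity
  · have hb : p.1 + 1 ≤ 2 := by linarith [h1.2]
    have := mul_le_mul_of_nonneg_right hb (by positivity : (0:ℝ) ≤ Lr n m / 2)
    unfold Lr at *
    nlinarith
  · linarith [h2.1]
  · linarith [h2.2]

/-- The rectangle is homeomorphic to the closed unit disk. -/
def diskHomeo (hm : 2 ≤ m) :
    (Rect n m) ≃ₜ ({x : EuclideanSpace ℝ (Fin 2) | ‖x‖ ≤ 1} : Set _) := by
  haveI : CompactSpace (Rect n m) := isCompact_iff_compactSpace.mp (isCompact_Rect n m)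
  refine Continuous.homeoOfEquivCompactToT2
    (f := ⟨fun q => ⟨toE2 (radial (aff n m q.1)), ?_⟩,
           fun x => ⟨affInv n m (radialInv (fromE2 x.1)), ?_⟩, ?_, ?_⟩) ?_
  · rw [mem_setOf_eq, toE2_norm, sq2_radial]
    exact aff_mem n m hm q.2
  · apply affInv_mem n m hm
    rw [norm_radialInv]
    have h : sq2 (fromE2 x.1) = ‖x.1‖ := by rw [← toE2_norm, toE2_fromE2]
    rw [h]
    exact x.2
  · intro q
    apply Subtype.ext
    dsimp only
    rw [fromE2_toE2, radialInv_radial, affInv_aff n m hm]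
  · intro x
    apply Subtype.ext
    dsimp only
    rw [aff_affInv n m hm, radial_radialInv, toE2_fromE2]
  · exact Continuous.subtype_mk
      ((continuous_toE2.comp (continuous_radial.comp (continuous_aff n m))).comp
        continuous_subtype_val) _

end

end DiskProof

theorem Dregion_homeomorphic_closedDisk (n m : ℕ) (hn : 1 ≤ n) (hm : 2 ≤ m) :
    Nonempty
      ((Dregion n m) ≃ₜ ({x : EuclideanSpace ℝ (Fin 2) | ‖x‖ ≤ 1} : Set _)) :=
  ⟨(DiskProof.rectHomeo n m hm).trans (DiskProof.diskHomeo n m hm)⟩
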